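/- Let a, b > 0 be real numbers and m, n ∈ ℕ, and set L = am + bn. Then the number of lattice points in the closed triangle bounded by the coordinate axes and the line ax + by = L equals (m+1)(n+1) + Σ_{i=1}^{m} ⌊ia/b⌋ + Σ_{j=1}^{n} ⌊jb/a⌋; that is, #{(i,j) ∈ ℕ×ℕ : ai + bj ≤ am + bn} = (m+1)(n+1) + Σ_{i=1}^{m} ⌊ia/b⌋ + Σ_{j=1}^{n} ⌊jb/a⌋. -/

import Mathlib

open Real Set Filter

noncomputable section

/-- Counting lattice points in the triangle bounded by the coordinate axes and the line
`ax + by = am + bn`: there are exactly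
`(m+1)(n+1) + Σ_{i=1}^{m} ⌊ia/b⌋ + Σ_{j=1}^{n} ⌊jb/a⌋` of them. -/
theorem triangle_lattice_point_count (a b : ℝ) (ha : 0 < a) (hb : 0 < b) (m n : ℕ) :
    ({p : ℕ × ℕ | a * p.1 + b * p.2 ≤ a * m + b * n}.ncard : ℤ) =
      (m + 1) * (n + 1) + ∑ i ∈ Finset.Icc 1 m, ⌊(i : ℝ) * a / b⌋
        + ∑ j ∈ Finset.Icc 1 n, ⌊(j : ℝ) * b / a⌋ := by
  classical
  set t : ℕ → ℕ := fun i => (⌊((m - i : ℕ) : ℝ) * a / b⌋).toNat with ht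
  set s : ℕ → ℕ := fun j => (⌊(j : ℝ) * b / a⌋).toNat with hs
  set F1 : Finset (ℕ × ℕ) := (Finset.range (m+1)).biUnion
    (fun i => (Finset.range (n+1+t i)).image (fun j => (i, j))) with hF1
  set F2 : Finset (ℕ × ℕ) := (Finset.Icc 1 n).biUnion
    (fun j' => (Finset.Icc 1 (s j')).image (fun i' => (m + i', n - j'))) with hF2
  -- key characterization for i ≤ m
  have keyA : ∀ i j : ℕ, i ≤ m →
      (a * i + b * j ≤ a * m + b * n ↔ j ≤ n + t i) := by
    intro i j him
    have hk : ((m - i : ℕ) : ℝ) = (m : ℝ) - i := by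
      push_cast [Nat.cast_sub him]; ring
    have hfl : (0 : ℤ) ≤ ⌊((m - i : ℕ) : ℝ) * a / b⌋ := by
      apply Int.floor_nonneg.mpr
      positivity
    have htn : ((t i : ℤ)) = ⌊((m - i : ℕ) : ℝ) * a / b⌋ := by
      simp [ht, Int.toNat_of_nonneg hfl]
    constructor
    · intro h
      have : ((j : ℤ) - n) ≤ ⌊((m - i : ℕ) : ℝ) * a / b⌋ := by
        apply Int.le_floor.mpr
        rw [le_div_iff₀ hb]
        push_cast
        rw [hk]
        nlinarith
      omega
    · intro h
      have h2 : ((j : ℤ) - n) ≤ ⌊((m - i : ℕ) : ℝ) * a / b⌋ := by omega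
      have := Int.le_floor.mp h2
      rw [le_div_iff₀ hb] at this
      push_cast at this
      rw [hk] at this
      nlinarith
  -- key characterization for i = m + i', i' ≥ 1
  have keyB : ∀ i' j' : ℕ, 1 ≤ j' → j' ≤ n →
      (a * (m + i') + b * (n - j' : ℕ) ≤ a * m + b * n ↔ i' ≤ s j') := by
    intro i' j' hj1 hjn
    have hjc : ((n - j' : ℕ) : ℝ) = (n : ℝ) - j' := by
      push_cast [Nat.cast_sub hjn]; ring
    have hfl : (0 : ℤ) ≤ ⌊(j' : ℝ) * b / a⌋ := by
      apply Int.floor_nonneg.mpr; positivity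
    have hsn : ((s j' : ℤ)) = ⌊(j' : ℝ) * b / a⌋ := by
      simp [hs, Int.toNat_of_nonneg hfl]
    constructor
    · intro h
      have : ((i' : ℤ)) ≤ ⌊(j' : ℝ) * b / a⌋ := by
        apply Int.le_floor.mpr
        rw [le_div_iff₀ ha]
        push_cast
        rw [hjc] at h
        nlinarith
      omega
    · intro h
      have h2 : ((i' : ℤ)) ≤ ⌊(j' : ℝ) * b / a⌋ := by omega
      have := Int.le_floor.mp h2
      rw [le_div_iff₀ ha] at this
      push_cast at this
      rw [hjc]
      nlinarith
  -- the set equals the finset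
  have hset : {p : ℕ × ℕ | a * p.1 + b * p.2 ≤ a * m + b * n} = ↑(F1 ∪ F2) := by
    ext ⟨i, j⟩
    simp only [Set.mem_setOf_eq, Finset.coe_union, Set.mem_union, Finset.mem_coe,
      hF1, hF2, Finset.mem_biUnion, Finset.mem_image, Finset.mem_range, Finset.mem_Icc,
      Prod.mk.injEq]
    constructor
    · intro h
      by_cases him : i ≤ m
      · left
        exact ⟨i, by omega, j, by have := (keyA i j him).mp h; omega, rfl, rfl⟩
      · right
        push_neg at him
        set i' := i - m with hi'
        have hi'1 : 1 ≤ i' := by omega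
        have hii : i = m + i' := by omega
        -- show j < n
        have hjn : j < n := by
          by_contra hjge
          push_neg at hjge
          have : a * i + b * j > a * m + b * n := by
            have h1 : (m : ℝ) + 1 ≤ i := by
              have : (m + 1 : ℕ) ≤ i := him
              exact_mod_cast Nat.cast_le.mpr this
            have h2 : (n : ℝ) ≤ j := by exact_mod_cast Nat.cast_le.mpr hjge
            nlinarith
          linarith
        set j' := n - j with hj'
        have hj'1 : 1 ≤ j' := by omega
        have hj'n : j' ≤ n := by omega
        have hjj : j = n - j' := by omega
        refine ⟨j', ⟨hj'1, hj'n⟩, i', ⟨hi'1, ?_⟩, by omega, by omega⟩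
        apply (keyB i' j' hj'1 hj'n).mp
        rw [show ((n - j' : ℕ)) = j from by omega]
        push_cast [hii] at h ⊢
        linarith
    · rintro (⟨i₀, hi₀, j₀, hj₀, rfl, rfl⟩ | ⟨j', ⟨hj'1, hj'n⟩, i', ⟨hi'1, hi's⟩, hi, hj⟩)
      · exact (keyA i₀ j₀ (by omega)).mpr (by omega)
      · subst hi; subst hj
        push_cast
        have := (keyB i' j' hj'1 hj'n).mpr hi's
        push_cast at this
        linarith
  have hdisj : Disjoint F1 F2 := by
    rw [Finset.disjoint_left]
    rintro ⟨i, j⟩ h1 h2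
    simp only [hF1, hF2, Finset.mem_biUnion, Finset.mem_image, Finset.mem_range,
      Finset.mem_Icc, Prod.mk.injEq] at h1 h2
    obtain ⟨i₀, hi₀, j₀, hj₀, rfl, rfl⟩ := h1
    obtain ⟨j', hj', i', hi', hi, hj⟩ := h2
    omega
  have hcard1 : F1.card = ∑ i ∈ Finset.range (m+1), (n + 1 + t i) := by
    rw [hF1, Finset.card_biUnion]
    · apply Finset.sum_congr rfl
      intro i _
      rw [Finset.card_image_of_injective _ (fun x y h => by simpa using h), Finset.card_range]
    · intro x _ y _ hxy
      rw [Function.onFun, Finset.disjoint_left]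
      rintro ⟨i, j⟩ h1 h2
      simp only [Finset.mem_image, Finset.mem_range, Prod.mk.injEq] at h1 h2
      obtain ⟨j₁, _, rfl, rfl⟩ := h1
      obtain ⟨j₂, _, h, _⟩ := h2
      exact hxy h.symm
  have hcard2 : F2.card = ∑ j' ∈ Finset.Icc 1 n, s j' := by
    rw [hF2, Finset.card_biUnion]
    · apply Finset.sum_congr rfl
      intro j' _
      rw [Finset.card_image_of_injective _ (fun x y h => by simpa using h), Nat.card_Icc]
      omega
    · intro x hx y hy hxy
      rw [Function.onFun, Finset.disjoint_left]
      rintro ⟨i, j⟩ h1 h2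
      simp only [Finset.mem_image, Finset.mem_Icc, Prod.mk.injEq] at h1 h2
      simp only [Finset.mem_coe, Finset.mem_Icc] at hx hy
      obtain ⟨i₁, _, rfl, rfl⟩ := h1
      obtain ⟨i₂, _, _, h⟩ := h2
      omega
  rw [hset, Set.ncard_coe_finset, Finset.card_union_of_disjoint hdisj, hcard1, hcard2]
  -- now pure arithmetic with floors
  have hfl1 : ∀ k : ℕ, ((⌊(k : ℝ) * a / b⌋).toNat : ℤ) = ⌊(k : ℝ) * a / b⌋ := by
    intro k
    exact Int.toNat_of_nonneg (Int.floor_nonneg.mpr (by positivity))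
  have hfl2 : ∀ k : ℕ, ((⌊(k : ℝ) * b / a⌋).toNat : ℤ) = ⌊(k : ℝ) * b / a⌋ := by
    intro k
    exact Int.toNat_of_nonneg (Int.floor_nonneg.mpr (by positivity))
  have hsum1 : ∑ i ∈ Finset.range (m+1), (n + 1 + t i)
      = (m+1) * (n+1) + ∑ i ∈ Finset.range (m+1), t i := by
    rw [Finset.sum_add_distrib, Finset.sum_const, Finset.card_range]
    ring
  rw [hsum1]
  have hrefl : ∑ i ∈ Finset.range (m+1), t i
      = ∑ i ∈ Finset.range (m+1), (⌊(i : ℝ) * a / b⌋).toNat := by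
    have := Finset.sum_range_reflect (fun k => (⌊(k : ℝ) * a / b⌋).toNat) (m+1)
    rw [← this]
    apply Finset.sum_congr rfl
    intro i hi
    simp only [Finset.mem_range] at hi
    simp only [ht]
    norm_num
  rw [hrefl]
  have hins : Finset.range (m+1) = insert 0 (Finset.Icc 1 m) := by
    ext x; simp; omega
  rw [hins, Finset.sum_insert (by simp)]
  push_cast [hfl1, hfl2]
  simp
  exact Finset.sum_congr rfl (fun k _ => hfl2 k)
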